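/- Let x* ∈ argmin f where f = max{f₁,…,f_N} with each fᵢ convex and differentiable. If 0 ∈ relint ∂f(x*), then for every i with fᵢ(x*) = f(x*) there exists y ∈ Λ(x*) with yᵢ > 0; that is, I(x*) = I⁺(x*). -/

import Mathlib

lemma stretch_lemma {H : Type*} [NormedAddCommGroup H] [NormedSpace ℝ H]
    {s : Set H} {b : H} (hb : b ∈ s)
    (h0 : (0 : H) ∈ intrinsicInterior ℝ s) :
    ∃ δ : ℝ, 0 < δ ∧ (-δ : ℝ) • b ∈ s := by
  obtain ⟨x', hx', hx'0⟩ := mem_intrinsicInterior.mp h0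
  have hbspan : b ∈ affineSpan ℝ s := subset_affineSpan ℝ s hb
  have h0span : (0 : H) ∈ affineSpan ℝ s := hx'0 ▸ x'.2
  have hmem : ∀ t : ℝ, (1 - t) • b ∈ affineSpan ℝ s := by
    intro t
    have := (affineSpan ℝ s).smul_vsub_vadd_mem t h0span hbspan hbspan
    have heq : t • ((0 : H) -ᵥ b) +ᵥ b = (1 - t) • b := by
      simp [vsub_eq_sub, vadd_eq_add, smul_sub, sub_smul]; abel
    rwa [heq] at this
  set c : ℝ → affineSpan ℝ s := fun t => ⟨(1 - t) • b, hmem t⟩ with hc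
  have hcont : Continuous c := by
    apply Continuous.subtype_mk
    exact ((continuous_const.sub continuous_id).smul continuous_const)
  have hc1 : c 1 = x' := by
    apply Subtype.ext
    simp [hc, hx'0.symm]
  have hopen : IsOpen (c ⁻¹' interior (((↑) : affineSpan ℝ s → H) ⁻¹' s)) :=
    isOpen_interior.preimage hcont
  have h1mem : (1 : ℝ) ∈ c ⁻¹' interior (((↑) : affineSpan ℝ s → H) ⁻¹' s) := by
    simp only [Set.mem_preimage, hc1]; exact hx'
  obtain ⟨ε, hε, hball⟩ := Metric.isOpen_iff.mp hopen 1 h1mem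
  refine ⟨ε / 2, by positivity, ?_⟩
  have ht : (1 + ε / 2) ∈ Metric.ball (1 : ℝ) ε := by
    simp [Real.dist_eq, abs_of_nonneg, hε.le]
    linarith
  have := hball ht
  have h2 : c (1 + ε / 2) ∈ ((↑) : affineSpan ℝ s → H) ⁻¹' s := interior_subset this
  simp only [Set.mem_preimage, hc] at h2
  convert h2 using 2
  ring

/-- Nondegeneracy `0 ∈ relint ∂f(x*)` implies that every active index is strongly
active: `I(x*) = I⁺(x*)`. -/
theorem active_eq_strongActive_of_nondegenerate {H : Type*} [NormedAddCommGroup H]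
    [InnerProductSpace ℝ H] [FiniteDimensional ℝ H]
    (N : ℕ) [NeZero N] (f : Fin N → H → ℝ) (g : Fin N → H → H)
    (hconv : ∀ i, ConvexOn ℝ Set.univ (f i))
    (hg : ∀ i x, HasGradientAt (f i) (g i x) x)
    (F : H → ℝ)
    (hF : ∀ x, F x = Finset.univ.sup' Finset.univ_nonempty (fun i => f i x))
    (xs : H) (hmin : ∀ x, F xs ≤ F x)
    (hnd : (0 : H) ∈ intrinsicInterior ℝ
        (convexHull ℝ ((fun i => g i xs) '' {i | f i xs = F xs}))) :
    {i : Fin N | f i xs = F xs}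
      = {i : Fin N | ∃ y ∈ stdSimplex ℝ (Fin N),
          (∑ j, y j • g j xs) = 0 ∧ (∑ j, y j * f j xs) = F xs ∧ 0 < y i} := by
  classical
  set v : Fin N → H := fun i => g i xs with hv
  set S : Set (Fin N) := {i | f i xs = F xs} with hS
  set Vs : Set H := convexHull ℝ (v '' S) with hVs
  have hle : ∀ j, f j xs ≤ F xs := by
    intro j; rw [hF]; exact Finset.le_sup' (fun i => f i xs) (Finset.mem_univ j)
  set T : Finset (Fin N) := Finset.univ.filter (fun i => f i xs = F xs) with hT
  have hTmem : ∀ i, i ∈ T ↔ f i xs = F xs := by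
    intro i; simp [hT]
  ext i₀
  simp only [Set.mem_setOf_eq]
  constructor
  · -- forward direction
    intro hi₀
    have hi₀T : i₀ ∈ T := (hTmem i₀).mpr hi₀
    have hTne : T.Nonempty := ⟨i₀, hi₀T⟩
    have hn : (0 : ℝ) < (T.card : ℝ) := by
      exact_mod_cast Finset.card_pos.mpr hTne
    set yu : Fin N → ℝ := fun j => if j ∈ T then (T.card : ℝ)⁻¹ else 0 with hyu
    have hyu_nonneg : ∀ j, 0 ≤ yu j := by
      intro j; simp only [hyu]; split <;> positivity
    have hyu_sum : ∑ j, yu j = 1 := by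
      simp only [hyu]
      rw [Finset.sum_ite_mem, Finset.univ_inter, Finset.sum_const, nsmul_eq_mul,
        mul_inv_cancel₀ (ne_of_gt hn)]
    have hyu_supp : ∀ j, j ∉ T → yu j = 0 := by
      intro j hj; simp [hyu, hj]
    set b : H := ∑ j, yu j • v j with hb
    have hbT : b = ∑ j ∈ T, yu j • v j := by
      rw [hb]
      exact (Finset.sum_subset (Finset.subset_univ T)
        (fun j _ hj => by simp [hyu_supp j hj])).symm
    have hyu_sumT : ∑ j ∈ T, yu j = 1 := by
      rw [← hyu_sum]
      exact Finset.sum_subset (Finset.subset_univ T) (fun j _ hj => hyu_supp j hj)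
    have hbVs : b ∈ Vs := by
      rw [hVs, hbT]
      exact (convex_convexHull ℝ _).sum_mem (fun j _ => hyu_nonneg j) hyu_sumT
        (fun j hj => subset_convexHull ℝ _ (Set.mem_image_of_mem v ((hTmem j).mp hj)))
    obtain ⟨δ, hδ, hδb⟩ := stretch_lemma hbVs hnd
    set K : Set H := {z | ∃ y : Fin N → ℝ, y ∈ stdSimplex ℝ (Fin N) ∧
        (∀ j, j ∉ T → y j = 0) ∧ ∑ j, y j • v j = z} with hK
    have hKconv : Convex ℝ K := by
      rintro z₁ ⟨y₁, hy₁s, hy₁supp, hy₁sum⟩ z₂ ⟨y₂, hy₂s, hy₂supp, hy₂sum⟩ a c ha hc hac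
      refine ⟨a • y₁ + c • y₂, (convex_stdSimplex ℝ (Fin N)) hy₁s hy₂s ha hc hac, ?_, ?_⟩
      · intro j hj
        simp [hy₁supp j hj, hy₂supp j hj]
      · simp only [Pi.add_apply, Pi.smul_apply, smul_eq_mul, add_smul, mul_smul]
        rw [Finset.sum_add_distrib, ← Finset.smul_sum, ← Finset.smul_sum, hy₁sum, hy₂sum]
    have hsub : Vs ⊆ K := by
      rw [hVs]
      apply convexHull_min ?_ hKconv
      rintro z ⟨i, hiS, rfl⟩
      have hiT : i ∈ T := (hTmem i).mpr hiS
      refine ⟨Pi.single i 1, ?_, ?_, ?_⟩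
      · constructor
        · intro j
          by_cases h : j = i
          · subst h; simp
          · simp [Pi.single_eq_of_ne h]
        · simp
      · intro j hj
        have : j ≠ i := fun h => hj (h ▸ hiT)
        simp [Pi.single_eq_of_ne this]
      · rw [Finset.sum_eq_single_of_mem i (Finset.mem_univ i)
          (fun j _ hji => by simp [Pi.single_eq_of_ne hji])]
        simp
    obtain ⟨μ, hμs, hμsupp, hμsum⟩ := hsub hδb
    set α : ℝ := δ / (1 + δ) with hα
    set β : ℝ := 1 / (1 + δ) with hβ
    have h1δ : (0:ℝ) < 1 + δ := by linarith
    have hαpos : 0 < α := by positivity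
    have hβpos : 0 < β := by positivity
    have hαβ : α + β = 1 := by
      rw [hα, hβ]; field_simp; ring
    refine ⟨fun j => α * yu j + β * μ j, ⟨?_, ?_⟩, ?_, ?_, ?_⟩
    · intro j
      have h1 := hμs.1 j
      have h2 := hyu_nonneg j
      have : (0:ℝ) ≤ α * yu j + β * μ j := by positivity
      exact this
    · show ∑ j, (α * yu j + β * μ j) = 1
      rw [Finset.sum_add_distrib, ← Finset.mul_sum, ← Finset.mul_sum, hyu_sum, hμs.2]
      simpa using hαβ
    · show ∑ j, (α * yu j + β * μ j) • v j = 0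
      simp only [add_smul, mul_smul]
      rw [Finset.sum_add_distrib, ← Finset.smul_sum, ← Finset.smul_sum, ← hb, hμsum]
      rw [smul_smul]
      have he : α • b + (β * -δ) • b = (α + β * -δ) • b := (add_smul _ _ b).symm
      rw [he]
      have hz : α + β * -δ = 0 := by
        rw [hα, hβ]; field_simp; ring
      rw [hz, zero_smul]
    · show ∑ j, (α * yu j + β * μ j) * f j xs = F xs
      have hterm : ∀ j, (α * yu j + β * μ j) * f j xs = (α * yu j + β * μ j) * F xs := by
        intro j
        by_cases hj : j ∈ T
        · rw [(hTmem j).mp hj]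
        · simp [hyu_supp j hj, hμsupp j hj]
      rw [Finset.sum_congr rfl (fun j _ => hterm j), ← Finset.sum_mul]
      rw [Finset.sum_add_distrib, ← Finset.mul_sum, ← Finset.mul_sum, hyu_sum, hμs.2,
        mul_one, mul_one, hαβ, one_mul]
    · show (0:ℝ) < α * yu i₀ + β * μ i₀
      have h1 : 0 < α * yu i₀ := by
        apply mul_pos hαpos
        have heq : yu i₀ = (T.card : ℝ)⁻¹ := by simp [hyu, hi₀T]
        rw [heq]
        exact inv_pos.mpr hn
      have h2 : 0 ≤ β * μ i₀ := mul_nonneg hβpos.le (hμs.1 i₀)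
      linarith
  · -- reverse direction
    rintro ⟨y, ⟨hynn, hysum⟩, _, hyF, hyi⟩
    by_contra hne
    have hlt : f i₀ xs < F xs := lt_of_le_of_ne (hle i₀) hne
    have hcon : ∑ j, y j * f j xs < ∑ j, y j * F xs := by
      apply Finset.sum_lt_sum
      · intro j _
        exact mul_le_mul_of_nonneg_left (hle j) (hynn j)
      · exact ⟨i₀, Finset.mem_univ i₀, mul_lt_mul_of_pos_left hlt hyi⟩
    rw [hyF, ← Finset.sum_mul, hysum, one_mul] at hcon
    exact lt_irrefl _ hcon
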